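/- Consider the Bayesian joint model in which θ_0 ~ π, X | θ_0 ~ f_{θ_0}, conditionally on X the draws θ̂_1, …, θ̂_B are i.i.d. from the posterior π(· | X) (conditionally independent of θ_0 given X), and conditionally on (X, θ̂_1, …, θ̂_B) the copies X̃^{(1)}, …, X̃^{(M)} are i.i.d. draws from g_π(· | θ̂_{1:B}) (conditionally independent of θ_0 and X). Then the random vector (X, X̃^{(1)}, …, X̃^{(M)}) is exactly exchangeable: its joint law is invariant under every permutation of the M+1 coordinates. -/

import Mathlib

open MeasureTheory ProbabilityTheory ENNReal

open scoped Classical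

noncomputable section

/-- The total variation distance `d_TV(P, Q) = sup_A |P(A) - Q(A)|` between two measures. -/
def tvDist {Ω : Type*} [MeasurableSpace Ω] (P Q : Measure Ω) : ℝ≥0∞ :=
  ⨆ (s : Set Ω) (_ : MeasurableSet s), (P s - Q s) ⊔ (Q s - P s)

/-- The chi-squared divergence `χ²(Q ‖ P) = ∫ (dQ/dP - 1)² dP` if `Q ≪ P`, and `∞` otherwise. -/
def chiSq {Ω : Type*} [MeasurableSpace Ω] (Q P : Measure Ω) : ℝ≥0∞ :=
  if Q ≪ P then ∫⁻ ω, ((Q.rnDeriv P ω - 1) ⊔ (1 - Q.rnDeriv P ω)) ^ 2 ∂P else ⊤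

/-- A measure on `Fin n → 𝒳` is exchangeable if it is invariant under every permutation of the
coordinates. -/
def Exchangeable {𝒳 : Type*} [MeasurableSpace 𝒳] {n : ℕ} (Q : Measure (Fin n → 𝒳)) : Prop :=
  ∀ σ : Equiv.Perm (Fin n), Measure.map (fun v => v ∘ σ) Q = Q

/-- The distance to exchangeability: the infimum, over exchangeable probability measures `Q`,
of the total variation distance to `Q`. -/
def dExch {𝒳 : Type*} [MeasurableSpace 𝒳] {n : ℕ} (P : Measure (Fin n → 𝒳)) : ℝ≥0∞ :=
  ⨅ (Q : Measure (Fin n → 𝒳)) (_ : IsProbabilityMeasure Q) (_ : Exchangeable Q), tvDist P Q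

/-- The p-value `(1 + #{m : T(v (m+1)) ≥ T(v 0)}) / (M + 1)`, where `v 0` is the data and
`v 1, …, v M` are the copies. -/
def pval {𝒳 : Type*} {M : ℕ} (T : 𝒳 → ℝ) (v : Fin (M + 1) → 𝒳) : ℝ :=
  (1 + ((Finset.univ.filter fun m : Fin M => T (v 0) ≤ T (v m.succ)).card : ℝ)) / (M + 1)

variable {Θ 𝒳 : Type*} [MeasurableSpace Θ] [MeasurableSpace 𝒳]

/-- The marginal likelihood `f̄_π(x) = ∫ π(θ) f_θ(x) dν_Θ(θ)`. -/
def marg (νΘ : Measure Θ) (π : Θ → ℝ≥0∞) (f : Θ → 𝒳 → ℝ≥0∞) (x : 𝒳) : ℝ≥0∞ :=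
  ∫⁻ θ, π θ * f θ x ∂νΘ

/-- The posterior density `π(θ | x) = π(θ) f_θ(x) / f̄_π(x)`. -/
def postDens (νΘ : Measure Θ) (π : Θ → ℝ≥0∞) (f : Θ → 𝒳 → ℝ≥0∞) (x : 𝒳) (θ : Θ) : ℝ≥0∞ :=
  π θ * f θ x / marg νΘ π f x

/-- The posterior distribution of `θ` given `x`. -/
def postMeas (νΘ : Measure Θ) (π : Θ → ℝ≥0∞) (f : Θ → 𝒳 → ℝ≥0∞) (x : 𝒳) : Measure Θ :=
  νΘ.withDensity (postDens νΘ π f x)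

/-- The unnormalized density of the copies: `(∏_b f_{θ_b}(x)) / f̄_π(x)^{B-1}`. -/
def gDensU (νΘ : Measure Θ) (π : Θ → ℝ≥0∞) (f : Θ → 𝒳 → ℝ≥0∞) {B : ℕ}
    (θs : Fin B → Θ) (x : 𝒳) : ℝ≥0∞ :=
  (∏ b, f (θs b) x) / (marg νΘ π f x) ^ (B - 1)

/-- The normalizing constant of `gDensU`. -/
def gNorm (νΘ : Measure Θ) (ν𝒳 : Measure 𝒳) (π : Θ → ℝ≥0∞) (f : Θ → 𝒳 → ℝ≥0∞) {B : ℕ}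
    (θs : Fin B → Θ) : ℝ≥0∞ :=
  ∫⁻ x, gDensU νΘ π f θs x ∂ν𝒳

/-- The probability distribution `g_π(· | θ_{1:B})` on `𝒳`. -/
def gMeas (νΘ : Measure Θ) (ν𝒳 : Measure 𝒳) (π : Θ → ℝ≥0∞) (f : Θ → 𝒳 → ℝ≥0∞) {B : ℕ}
    (θs : Fin B → Θ) : Measure 𝒳 :=
  ν𝒳.withDensity fun x => gDensU νΘ π f θs x / gNorm νΘ ν𝒳 π f θs

/-- The prior concentration `ε(π₀) = d_TV(f_{θ₀}, f̄_{π₀})`. -/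
def priorEps (νΘ : Measure Θ) (ν𝒳 : Measure 𝒳) (f : Θ → 𝒳 → ℝ≥0∞) (θ0 : Θ)
    (π0 : Θ → ℝ≥0∞) : ℝ≥0∞ :=
  tvDist (ν𝒳.withDensity (f θ0)) (ν𝒳.withDensity (marg νΘ π0 f))

/-- The posterior sensitivity `Δ(π₀) = E_{X ~ f_{θ₀}}[χ²(π₀(·|X) ‖ π(·|X))^{1/2}]`. -/
def priorDelta (νΘ : Measure Θ) (ν𝒳 : Measure 𝒳) (π : Θ → ℝ≥0∞) (f : Θ → 𝒳 → ℝ≥0∞)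
    (θ0 : Θ) (π0 : Θ → ℝ≥0∞) : ℝ≥0∞ :=
  ∫⁻ x, (chiSq (postMeas νΘ π0 f x) (postMeas νΘ π f x)) ^ (1 / 2 : ℝ)
    ∂(ν𝒳.withDensity (f θ0))

/-- The bound `inf_{π₀} { ε(π₀) + Δ(π₀) / (2√B) }`, the infimum over all prior densities `π₀`
on `Θ` whose marginal `f̄_{π₀}` is positive wherever some `f_θ` is positive. -/
def acssBound (νΘ : Measure Θ) (ν𝒳 : Measure 𝒳) (π : Θ → ℝ≥0∞) (f : Θ → 𝒳 → ℝ≥0∞)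
    (θ0 : Θ) (B : ℕ) : ℝ≥0∞ :=
  sInf { r : ℝ≥0∞ | ∃ π0 : Θ → ℝ≥0∞, Measurable π0 ∧
    IsProbabilityMeasure (νΘ.withDensity π0) ∧
    (∀ θ x, f θ x ≠ 0 → marg νΘ π0 f x ≠ 0) ∧
    r = priorEps νΘ ν𝒳 f θ0 π0
        + priorDelta νΘ ν𝒳 π f θ0 π0 / (2 * (B : ℝ≥0∞) ^ (1 / 2 : ℝ)) }

section ACSSAux

variable (νΘ : Measure Θ) (ν𝒳 : Measure 𝒳) (π : Θ → ℝ≥0∞) (f : Θ → 𝒳 → ℝ≥0∞)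

lemma ACSS.marg_measurable [SigmaFinite νΘ] (hπ : Measurable π)
    (hf : Measurable (Function.uncurry f)) : Measurable (marg νΘ π f) := by
  unfold marg
  exact Measurable.lintegral_prod_left ((hπ.comp measurable_fst).mul hf)

lemma ACSS.gDensU_measurable {B : ℕ} [SigmaFinite νΘ] (hπ : Measurable π)
    (hf : Measurable (Function.uncurry f)) :
    Measurable (fun q : (Fin B → Θ) × 𝒳 => gDensU νΘ π f q.1 q.2) := by
  unfold gDensU
  exact (Finset.measurable_prod _ fun b _ =>
      hf.comp (((measurable_pi_apply b).comp measurable_fst).prodMk measurable_snd)).div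
    (((ACSS.marg_measurable νΘ π f hπ hf).comp measurable_snd).pow_const _)

lemma ACSS.gNorm_measurable {B : ℕ} [SigmaFinite νΘ] [SigmaFinite ν𝒳] (hπ : Measurable π)
    (hf : Measurable (Function.uncurry f)) :
    Measurable (fun θs : Fin B → Θ => gNorm νΘ ν𝒳 π f θs) := by
  unfold gNorm
  exact (ACSS.gDensU_measurable νΘ π f hπ hf).lintegral_prod_right'

lemma ACSS.postDens_measurable [SigmaFinite νΘ] (hπ : Measurable π)
    (hf : Measurable (Function.uncurry f)) :
    Measurable (fun q : 𝒳 × Θ => postDens νΘ π f q.1 q.2) := by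
  unfold postDens
  exact ((hπ.comp measurable_snd).mul
    (hf.comp (measurable_snd.prodMk measurable_fst))).div
    ((ACSS.marg_measurable νΘ π f hπ hf).comp measurable_fst)

lemma ACSS.marg_ae_ne_top [SigmaFinite νΘ] [SigmaFinite ν𝒳] (hπ : Measurable π)
    (hf : Measurable (Function.uncurry f))
    (hfprob : ∀ θ, IsProbabilityMeasure (ν𝒳.withDensity (f θ)))
    (hπprob : IsProbabilityMeasure (νΘ.withDensity π)) :
    ∀ᵐ x ∂ν𝒳, marg νΘ π f x ≠ ⊤ := by
  have hπint : ∫⁻ θ, π θ ∂νΘ = 1 := by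
    have := hπprob.measure_univ
    rwa [withDensity_apply _ MeasurableSet.univ, setLIntegral_univ] at this
  have hint : ∫⁻ x, marg νΘ π f x ∂ν𝒳 = 1 := by
    unfold marg
    rw [lintegral_lintegral_swap
      (((hπ.comp measurable_snd).mul (hf.comp measurable_swap)).aemeasurable)]
    have h1 : ∀ θ, ∫⁻ x, π θ * f θ x ∂ν𝒳 = π θ := by
      intro θ
      rw [lintegral_const_mul _ (show Measurable (f θ) from hf.comp measurable_prodMk_left)]
      have := (hfprob θ).measure_univ
      rw [withDensity_apply _ MeasurableSet.univ, setLIntegral_univ] at this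
      rw [this, mul_one]
    rw [lintegral_congr h1, hπint]
  exact (ae_lt_top (ACSS.marg_measurable νΘ π f hπ hf) (hint ▸ one_ne_top)).mono
    fun x hx => hx.ne

lemma ACSS.core_density_eq {B : ℕ}
    (hsupp : ∀ θ x, f θ x ≠ 0 → marg νΘ π f x ≠ 0) (hB : 1 ≤ B)
    (x : 𝒳) (hx : marg νΘ π f x ≠ ⊤) (θs : Fin B → Θ) :
    marg νΘ π f x * ∏ b, postDens νΘ π f x (θs b)
      = (∏ b, π (θs b)) * gDensU νΘ π f θs x := by
  unfold postDens gDensU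
  rcases eq_or_ne (marg νΘ π f x) 0 with h0 | h0
  · have hprodf : (∏ b, f (θs b) x) = 0 :=
      Finset.prod_eq_zero (Finset.mem_univ (⟨0, hB⟩ : Fin B)) (by
        by_contra h; exact (hsupp _ _ h) h0)
    rw [h0, zero_mul, hprodf, ENNReal.zero_div, mul_zero]
  · have hBpos : B - 1 + 1 = B := Nat.succ_pred_eq_of_pos hB
    have hc : marg νΘ π f x * (marg νΘ π f x)⁻¹ = 1 := ENNReal.mul_inv_cancel h0 hx
    calc marg νΘ π f x * ∏ b, π (θs b) * f (θs b) x / marg νΘ π f x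
        = (∏ b, π (θs b)) * ((∏ b, f (θs b) x) * ((marg νΘ π f x)⁻¹) ^ (B - 1))
            * (marg νΘ π f x * (marg νΘ π f x)⁻¹) := by
          simp_rw [div_eq_mul_inv]
          rw [Finset.prod_mul_distrib, Finset.prod_mul_distrib, Finset.prod_const,
            Finset.card_univ, Fintype.card_fin]
          have hsplit : (marg νΘ π f x)⁻¹ ^ B
              = (marg νΘ π f x)⁻¹ ^ (B - 1) * (marg νΘ π f x)⁻¹ := by
            rw [← pow_succ, hBpos]
          rw [hsplit]; ring
      _ = (∏ b, π (θs b)) * ((∏ b, f (θs b) x) / (marg νΘ π f x) ^ (B - 1)) := by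
          rw [hc, mul_one, div_eq_mul_inv, ENNReal.inv_pow]

lemma ACSS.map_withDensity_equiv {α β : Type*} [MeasurableSpace α] [MeasurableSpace β]
    (e : α ≃ᵐ β) (μ : Measure α) {g : β → ℝ≥0∞} (hg : Measurable g) :
    Measure.map e (μ.withDensity fun a => g (e a)) = (Measure.map e μ).withDensity g := by
  ext s hs
  rw [Measure.map_apply e.measurable hs, withDensity_apply _ (e.measurable hs),
    withDensity_apply _ hs, setLIntegral_map hs hg e.measurable]

lemma ACSS.pi_perm_invariant {n : ℕ} (ν : Measure 𝒳) [SigmaFinite ν] (σ : Equiv.Perm (Fin n)) :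
    Measure.map (fun v : Fin n → 𝒳 => v ∘ σ) (Measure.pi fun _ => ν)
      = Measure.pi fun _ => ν := by
  have he : ⇑(MeasurableEquiv.piCongrLeft (fun _ : Fin n => 𝒳) σ.symm)
      = fun v => v ∘ σ := by
    funext v
    funext i
    have h := Equiv.piCongrLeft_apply_apply (fun _ : Fin n => 𝒳) σ.symm v (σ i)
    simp only [Equiv.symm_apply_apply] at h
    simpa [MeasurableEquiv.coe_piCongrLeft] using h
  rw [← he]
  exact (measurePreserving_piCongrLeft (fun _ : Fin n => ν) σ.symm).map_eq

end ACSSAux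

section ACSSMain

variable (νΘ : Measure Θ) (ν𝒳 : Measure 𝒳) (π : Θ → ℝ≥0∞) (f : Θ → 𝒳 → ℝ≥0∞)

lemma ACSS.map_withDensity {α β : Type*} [MeasurableSpace α] [MeasurableSpace β]
    {g : α → β} (hg : Measurable g) (μ : Measure α) {D : β → ℝ≥0∞} (hD : Measurable D) :
    Measure.map g (μ.withDensity fun a => D (g a)) = (Measure.map g μ).withDensity D := by
  ext s hs
  rw [Measure.map_apply hg hs, withDensity_apply _ (hg hs),
    withDensity_apply _ hs, setLIntegral_map hs hD hg]

lemma ACSS.sym {B M : ℕ} [SigmaFinite νΘ] [SigmaFinite ν𝒳]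
    (hπ : Measurable π) (hf : Measurable (Function.uncurry f))
    (σ : Equiv.Perm (Fin (M + 1))) :
    Measure.map (fun q : (Fin B → Θ) × (Fin (M + 1) → 𝒳) => (q.1, q.2 ∘ σ))
      (((Measure.pi fun _ : Fin B => νΘ).prod
          (Measure.pi fun _ : Fin (M + 1) => ν𝒳)).withDensity
        fun q => (∏ b, π (q.1 b)) * (∏ i, gDensU νΘ π f q.1 (q.2 i))
          / gNorm νΘ ν𝒳 π f q.1 ^ M)
    = ((Measure.pi fun _ : Fin B => νΘ).prod
          (Measure.pi fun _ : Fin (M + 1) => ν𝒳)).withDensity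
        fun q => (∏ b, π (q.1 b)) * (∏ i, gDensU νΘ π f q.1 (q.2 i))
          / gNorm νΘ ν𝒳 π f q.1 ^ M := by
  have hgU := ACSS.gDensU_measurable νΘ π f (B := B) hπ hf
  have hgN := ACSS.gNorm_measurable νΘ ν𝒳 π f (B := B) hπ hf
  set D : (Fin B → Θ) × (Fin (M + 1) → 𝒳) → ℝ≥0∞ := fun q =>
    (∏ b, π (q.1 b)) * (∏ i, gDensU νΘ π f q.1 (q.2 i)) / gNorm νΘ ν𝒳 π f q.1 ^ M with hDdef
  have hDmeas : Measurable D :=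
    ((Finset.measurable_prod _ fun b _ =>
        hπ.comp ((measurable_pi_apply b).comp measurable_fst)).mul
      (Finset.measurable_prod _ fun i _ =>
        hgU.comp (measurable_fst.prodMk ((measurable_pi_apply i).comp measurable_snd)))).div
      ((hgN.comp measurable_fst).pow_const _)
  have hσm : Measurable (fun v : Fin (M + 1) → 𝒳 => v ∘ σ) :=
    measurable_pi_iff.2 fun i => measurable_pi_apply _
  have hTm : Measurable (fun q : (Fin B → Θ) × (Fin (M + 1) → 𝒳) => (q.1, q.2 ∘ σ)) :=
    measurable_fst.prodMk (hσm.comp measurable_snd)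
  have hDe : (fun q : (Fin B → Θ) × (Fin (M + 1) → 𝒳) => D (q.1, q.2 ∘ σ)) = D := by
    funext q
    simp only [hDdef]
    congr 2
    exact Equiv.prod_comp σ fun i => gDensU νΘ π f q.1 (q.2 i)
  have hbase : Measure.map (fun q : (Fin B → Θ) × (Fin (M + 1) → 𝒳) => (q.1, q.2 ∘ σ))
      ((Measure.pi fun _ : Fin B => νΘ).prod (Measure.pi fun _ : Fin (M + 1) => ν𝒳))
      = (Measure.pi fun _ : Fin B => νΘ).prod (Measure.pi fun _ : Fin (M + 1) => ν𝒳) := by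
    have h1 : MeasurePreserving (id : (Fin B → Θ) → (Fin B → Θ))
        (Measure.pi fun _ => νΘ) (Measure.pi fun _ => νΘ) := MeasurePreserving.id _
    have h2 : MeasurePreserving (fun v : Fin (M + 1) → 𝒳 => v ∘ σ)
        (Measure.pi fun _ => ν𝒳) (Measure.pi fun _ => ν𝒳) :=
      ⟨hσm, ACSS.pi_perm_invariant ν𝒳 σ⟩
    have h3 := h1.prod h2
    have : (Prod.map (id : (Fin B → Θ) → (Fin B → Θ)) (fun v : Fin (M + 1) → 𝒳 => v ∘ σ))
        = fun q : (Fin B → Θ) × (Fin (M + 1) → 𝒳) => (q.1, q.2 ∘ σ) := by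
      funext q; obtain ⟨a, b⟩ := q; rfl
    rw [← this]
    exact h3.map_eq
  calc Measure.map (fun q : (Fin B → Θ) × (Fin (M + 1) → 𝒳) => (q.1, q.2 ∘ σ))
        (((Measure.pi fun _ : Fin B => νΘ).prod
          (Measure.pi fun _ : Fin (M + 1) => ν𝒳)).withDensity D)
      = Measure.map (fun q : (Fin B → Θ) × (Fin (M + 1) → 𝒳) => (q.1, q.2 ∘ σ))
        (((Measure.pi fun _ : Fin B => νΘ).prod
          (Measure.pi fun _ : Fin (M + 1) => ν𝒳)).withDensity
            fun q => D (q.1, q.2 ∘ σ)) := by rw [hDe]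
    _ = (Measure.map (fun q : (Fin B → Θ) × (Fin (M + 1) → 𝒳) => (q.1, q.2 ∘ σ))
        ((Measure.pi fun _ : Fin B => νΘ).prod
          (Measure.pi fun _ : Fin (M + 1) => ν𝒳))).withDensity D :=
      ACSS.map_withDensity hTm _ hDmeas
    _ = ((Measure.pi fun _ : Fin B => νΘ).prod
          (Measure.pi fun _ : Fin (M + 1) => ν𝒳)).withDensity D := by rw [hbase]

end ACSSMain

section ACSSKey

variable (νΘ : Measure Θ) (ν𝒳 : Measure 𝒳) (π : Θ → ℝ≥0∞) (f : Θ → 𝒳 → ℝ≥0∞)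

set_option maxHeartbeats 2000000 in
lemma ACSS.key {B M : ℕ} [SigmaFinite νΘ] [SigmaFinite ν𝒳]
    (hπ : Measurable π) (hf : Measurable (Function.uncurry f))
    (hfprob : ∀ θ, IsProbabilityMeasure (ν𝒳.withDensity (f θ)))
    (hπprob : IsProbabilityMeasure (νΘ.withDensity π))
    (hsupp : ∀ θ x, f θ x ≠ 0 → marg νΘ π f x ≠ 0) (hB : 1 ≤ B) :
    Measure.map
      (fun p : Θ × 𝒳 × (Fin B → Θ) × (Fin M → 𝒳) =>
        (Fin.cons p.2.1 p.2.2.2 : Fin (M + 1) → 𝒳))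
      ((νΘ.prod (ν𝒳.prod ((Measure.pi fun _ : Fin B => νΘ).prod
          (Measure.pi fun _ : Fin M => ν𝒳)))).withDensity
        fun p => π p.1 * f p.1 p.2.1
          * (∏ b, postDens νΘ π f p.2.1 (p.2.2.1 b))
          * ∏ m, gDensU νΘ π f p.2.2.1 (p.2.2.2 m) / gNorm νΘ ν𝒳 π f p.2.2.1)
    = Measure.map (Prod.snd : (Fin B → Θ) × (Fin (M + 1) → 𝒳) → Fin (M + 1) → 𝒳)
      (((Measure.pi fun _ : Fin B => νΘ).prod
          (Measure.pi fun _ : Fin (M + 1) => ν𝒳)).withDensity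
        fun q => (∏ b, π (q.1 b)) * (∏ i, gDensU νΘ π f q.1 (q.2 i))
          / gNorm νΘ ν𝒳 π f q.1 ^ M) := by
  classical
  have hmarg := ACSS.marg_measurable νΘ π f hπ hf
  have hgU := ACSS.gDensU_measurable νΘ π f (B := B) hπ hf
  have hgN := ACSS.gNorm_measurable νΘ ν𝒳 π f (B := B) hπ hf
  have hpost := ACSS.postDens_measurable νΘ π f hπ hf
  have hconsm : Measurable (fun r : 𝒳 × (Fin M → 𝒳) => (Fin.cons r.1 r.2 : Fin (M + 1) → 𝒳)) := by
    refine measurable_pi_iff.2 fun i => ?_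
    refine Fin.cases ?_ (fun j => ?_) i
    · simpa using measurable_fst
    · have h : Measurable fun x : 𝒳 × (Fin M → 𝒳) => x.2 j :=
        (measurable_pi_apply j).comp measurable_snd
      simpa using h
  have hcfull : Measurable (fun p : Θ × 𝒳 × (Fin B → Θ) × (Fin M → 𝒳) =>
      (Fin.cons p.2.1 p.2.2.2 : Fin (M + 1) → 𝒳)) :=
    hconsm.comp ((measurable_fst.comp measurable_snd).prodMk
      (measurable_snd.comp (measurable_snd.comp measurable_snd)))
  ext s hs
  set I : (Fin (M + 1) → 𝒳) → ℝ≥0∞ := s.indicator (fun _ => (1 : ℝ≥0∞)) with hIdef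
  have hIm : Measurable I := measurable_const.indicator hs
  have hindic : ∀ {γ : Type _} (g : γ → (Fin (M + 1) → 𝒳)) (dns : γ → ℝ≥0∞) (p : γ),
      (g ⁻¹' s).indicator dns p = dns p * I (g p) := by
    intro γ g dns p
    by_cases h : g p ∈ s
    · simp [Set.indicator, h, hIdef]
    · simp [Set.indicator, h, hIdef]
  -- measurability of big densities
  have hdens : Measurable (fun p : Θ × 𝒳 × (Fin B → Θ) × (Fin M → 𝒳) =>
      π p.1 * f p.1 p.2.1 * (∏ b, postDens νΘ π f p.2.1 (p.2.2.1 b))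
        * ∏ m, gDensU νΘ π f p.2.2.1 (p.2.2.2 m) / gNorm νΘ ν𝒳 π f p.2.2.1) := by
    refine (((hπ.comp measurable_fst).mul
      (hf.comp (measurable_fst.prodMk (measurable_fst.comp measurable_snd)))).mul
      (Finset.measurable_prod _ fun b _ =>
        hpost.comp ((measurable_fst.comp measurable_snd).prodMk
          ((measurable_pi_apply b).comp
            (measurable_fst.comp (measurable_snd.comp measurable_snd)))))).mul
      (Finset.measurable_prod _ fun m _ =>
        (hgU.comp ((measurable_fst.comp (measurable_snd.comp measurable_snd)).prodMk
          ((measurable_pi_apply m).comp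
            (measurable_snd.comp (measurable_snd.comp measurable_snd))))).div
        (hgN.comp (measurable_fst.comp (measurable_snd.comp measurable_snd))))
  have hDmeas : Measurable (fun q : (Fin B → Θ) × (Fin (M + 1) → 𝒳) =>
      (∏ b, π (q.1 b)) * (∏ i, gDensU νΘ π f q.1 (q.2 i)) / gNorm νΘ ν𝒳 π f q.1 ^ M) :=
    ((Finset.measurable_prod _ fun b _ =>
        hπ.comp ((measurable_pi_apply b).comp measurable_fst)).mul
      (Finset.measurable_prod _ fun i _ =>
        hgU.comp (measurable_fst.prodMk ((measurable_pi_apply i).comp measurable_snd)))).div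
      ((hgN.comp measurable_fst).pow_const _)
  -- LHS ------------------------------------------------------------------
  rw [Measure.map_apply hcfull hs, Measure.map_apply measurable_snd hs,
    withDensity_apply _ (hcfull hs), withDensity_apply _ (measurable_snd hs),
    ← lintegral_indicator (hcfull hs), ← lintegral_indicator (measurable_snd hs),
    lintegral_congr (hindic (fun p : Θ × 𝒳 × (Fin B → Θ) × (Fin M → 𝒳) =>
      (Fin.cons p.2.1 p.2.2.2 : Fin (M + 1) → 𝒳)) _),
    lintegral_congr (hindic (Prod.snd : (Fin B → Θ) × (Fin (M + 1) → 𝒳) → _) _)]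
  -- now both sides are plain lintegrals
  have hK2 : Measurable (fun y : 𝒳 × ((Fin B → Θ) × (Fin M → 𝒳)) =>
      marg νΘ π f y.1 * ((∏ b, postDens νΘ π f y.1 (y.2.1 b)) *
        ((∏ m, gDensU νΘ π f y.2.1 (y.2.2 m) / gNorm νΘ ν𝒳 π f y.2.1) *
          I (Fin.cons y.1 y.2.2)))) := by
    refine (hmarg.comp measurable_fst).mul
      (((Finset.measurable_prod _ fun b _ =>
          hpost.comp (measurable_fst.prodMk
            ((measurable_pi_apply b).comp (measurable_fst.comp measurable_snd))))).mul
        (((Finset.measurable_prod _ fun m _ =>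
          (hgU.comp ((measurable_fst.comp measurable_snd).prodMk
            ((measurable_pi_apply m).comp (measurable_snd.comp measurable_snd)))).div
          (hgN.comp (measurable_fst.comp measurable_snd)))).mul
          (hIm.comp (hconsm.comp
            (measurable_fst.prodMk (measurable_snd.comp measurable_snd))))))
  have hHm : Measurable (fun r : ((Fin B → Θ) × 𝒳) × (Fin M → 𝒳) =>
      ((∏ b, π (r.1.1 b)) * (∏ i, gDensU νΘ π f r.1.1 ((Fin.cons r.1.2 r.2 : Fin (M + 1) → 𝒳) i))
        / gNorm νΘ ν𝒳 π f r.1.1 ^ M) * I (Fin.cons r.1.2 r.2)) := by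
    have mpair : Measurable (fun r : ((Fin B → Θ) × 𝒳) × (Fin M → 𝒳) =>
        ((r.1.1, Fin.cons r.1.2 r.2) : (Fin B → Θ) × (Fin (M + 1) → 𝒳))) :=
      (measurable_fst.comp measurable_fst).prodMk
        (hconsm.comp ((measurable_snd.comp measurable_fst).prodMk measurable_snd))
    exact (hDmeas.comp mpair).mul
      (hIm.comp (hconsm.comp ((measurable_snd.comp measurable_fst).prodMk measurable_snd)))
  -- chains
  calc ∫⁻ p, (π p.1 * f p.1 p.2.1 * (∏ b, postDens νΘ π f p.2.1 (p.2.2.1 b))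
          * ∏ m, gDensU νΘ π f p.2.2.1 (p.2.2.2 m) / gNorm νΘ ν𝒳 π f p.2.2.1)
          * I (Fin.cons p.2.1 p.2.2.2)
        ∂(νΘ.prod (ν𝒳.prod ((Measure.pi fun _ : Fin B => νΘ).prod
          (Measure.pi fun _ : Fin M => ν𝒳))))
      = ∫⁻ y, ∫⁻ θ0, (π θ0 * f θ0 y.1 * (∏ b, postDens νΘ π f y.1 (y.2.1 b))
          * ∏ m, gDensU νΘ π f y.2.1 (y.2.2 m) / gNorm νΘ ν𝒳 π f y.2.1)
          * I (Fin.cons y.1 y.2.2) ∂νΘ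
        ∂(ν𝒳.prod ((Measure.pi fun _ : Fin B => νΘ).prod
          (Measure.pi fun _ : Fin M => ν𝒳))) :=
        lintegral_prod_symm' _ (hdens.mul (hIm.comp hcfull))
    _ = ∫⁻ y, marg νΘ π f y.1 * ((∏ b, postDens νΘ π f y.1 (y.2.1 b)) *
          ((∏ m, gDensU νΘ π f y.2.1 (y.2.2 m) / gNorm νΘ ν𝒳 π f y.2.1) *
            I (Fin.cons y.1 y.2.2)))
        ∂(ν𝒳.prod ((Measure.pi fun _ : Fin B => νΘ).prod
          (Measure.pi fun _ : Fin M => ν𝒳))) := by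
        refine lintegral_congr fun y => ?_
        have h1 : ∀ θ0 : Θ, (π θ0 * f θ0 y.1 * (∏ b, postDens νΘ π f y.1 (y.2.1 b))
            * ∏ m, gDensU νΘ π f y.2.1 (y.2.2 m) / gNorm νΘ ν𝒳 π f y.2.1)
            * I (Fin.cons y.1 y.2.2)
            = (π θ0 * f θ0 y.1) * ((∏ b, postDens νΘ π f y.1 (y.2.1 b)) *
              ((∏ m, gDensU νΘ π f y.2.1 (y.2.2 m) / gNorm νΘ ν𝒳 π f y.2.1) *
                I (Fin.cons y.1 y.2.2))) := fun θ0 => by ring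
        rw [lintegral_congr h1,
          lintegral_mul_const _ (show Measurable fun θ0 : Θ => π θ0 * f θ0 y.1 from hπ.mul (hf.comp (measurable_id.prodMk measurable_const)))]
        rfl
    _ = ∫⁻ x, ∫⁻ z, marg νΘ π f x * ((∏ b, postDens νΘ π f x (z.1 b)) *
          ((∏ m, gDensU νΘ π f z.1 (z.2 m) / gNorm νΘ ν𝒳 π f z.1) *
            I (Fin.cons x z.2)))
          ∂((Measure.pi fun _ : Fin B => νΘ).prod (Measure.pi fun _ : Fin M => ν𝒳))
        ∂ν𝒳 := lintegral_prod _ hK2.aemeasurable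
    _ = ∫⁻ x, ∫⁻ θs, ∫⁻ xt, marg νΘ π f x * ((∏ b, postDens νΘ π f x (θs b)) *
          ((∏ m, gDensU νΘ π f θs (xt m) / gNorm νΘ ν𝒳 π f θs) *
            I (Fin.cons x xt)))
          ∂(Measure.pi fun _ : Fin M => ν𝒳) ∂(Measure.pi fun _ : Fin B => νΘ)
        ∂ν𝒳 := by
        refine lintegral_congr fun x => ?_
        exact lintegral_prod _ ((hK2.comp (measurable_const.prodMk measurable_id)).aemeasurable)
    _ = ∫⁻ x, ∫⁻ θs, ∫⁻ xt, ((∏ b, π (θs b)) * (∏ i, gDensU νΘ π f θs ((Fin.cons x xt : Fin (M + 1) → 𝒳) i))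
            / gNorm νΘ ν𝒳 π f θs ^ M) * I (Fin.cons x xt)
          ∂(Measure.pi fun _ : Fin M => ν𝒳) ∂(Measure.pi fun _ : Fin B => νΘ)
        ∂ν𝒳 := by
        refine lintegral_congr_ae ?_
        filter_upwards [ACSS.marg_ae_ne_top νΘ ν𝒳 π f hπ hf hfprob hπprob] with x hx
        refine lintegral_congr fun θs => lintegral_congr fun xt => ?_
        have core := ACSS.core_density_eq νΘ π f hsupp hB x hx θs
        rw [Fin.prod_univ_succ]
        simp only [Fin.cons_zero, Fin.cons_succ]
        simp_rw [div_eq_mul_inv]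
        rw [Finset.prod_mul_distrib, Finset.prod_const, Finset.card_univ, Fintype.card_fin,
          ENNReal.inv_pow]
        calc marg νΘ π f x * ((∏ b, postDens νΘ π f x (θs b)) *
              (((∏ m, gDensU νΘ π f θs (xt m)) * (gNorm νΘ ν𝒳 π f θs)⁻¹ ^ M) *
                I (Fin.cons x xt)))
            = (marg νΘ π f x * ∏ b, postDens νΘ π f x (θs b)) *
              (((∏ m, gDensU νΘ π f θs (xt m)) * (gNorm νΘ ν𝒳 π f θs)⁻¹ ^ M) *
                I (Fin.cons x xt)) := by ring
          _ = ((∏ b, π (θs b)) * gDensU νΘ π f θs x) *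
              (((∏ m, gDensU νΘ π f θs (xt m)) * (gNorm νΘ ν𝒳 π f θs)⁻¹ ^ M) *
                I (Fin.cons x xt)) := by rw [core]
          _ = (∏ b, π (θs b)) * (gDensU νΘ π f θs x * ∏ m, gDensU νΘ π f θs (xt m)) *
                (gNorm νΘ ν𝒳 π f θs)⁻¹ ^ M * I (Fin.cons x xt) := by ring
    _ = ∫⁻ θs, ∫⁻ x, ∫⁻ xt, ((∏ b, π (θs b)) * (∏ i, gDensU νΘ π f θs ((Fin.cons x xt : Fin (M + 1) → 𝒳) i))
            / gNorm νΘ ν𝒳 π f θs ^ M) * I (Fin.cons x xt)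
          ∂(Measure.pi fun _ : Fin M => ν𝒳) ∂ν𝒳
        ∂(Measure.pi fun _ : Fin B => νΘ) := by
        refine (lintegral_lintegral_swap (μ := Measure.pi fun _ : Fin B => νΘ) (ν := ν𝒳)
          (f := fun θs x => ∫⁻ xt, ((∏ b, π (θs b)) *
            (∏ i, gDensU νΘ π f θs ((Fin.cons x xt : Fin (M + 1) → 𝒳) i))
            / gNorm νΘ ν𝒳 π f θs ^ M) * I (Fin.cons x xt)
            ∂(Measure.pi fun _ : Fin M => ν𝒳)) ?_).symm
        exact (Measurable.lintegral_prod_right'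
          (ν := Measure.pi fun _ : Fin M => ν𝒳) hHm).aemeasurable
    _ = ∫⁻ θs, ∫⁻ r, ((∏ b, π (θs b)) * (∏ i, gDensU νΘ π f θs ((Fin.cons r.1 r.2 : Fin (M + 1) → 𝒳) i))
            / gNorm νΘ ν𝒳 π f θs ^ M) * I (Fin.cons r.1 r.2)
          ∂(ν𝒳.prod (Measure.pi fun _ : Fin M => ν𝒳))
        ∂(Measure.pi fun _ : Fin B => νΘ) := by
        refine lintegral_congr fun θs => ?_
        exact (lintegral_prod _ ((hHm.comp ((measurable_const.prodMk
          (measurable_fst)).prodMk measurable_snd)).aemeasurable)).symm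
    _ = ∫⁻ θs, ∫⁻ v, ((∏ b, π (θs b)) * (∏ i, gDensU νΘ π f θs (v i))
            / gNorm νΘ ν𝒳 π f θs ^ M) * I v
          ∂(Measure.pi fun _ : Fin (M + 1) => ν𝒳)
        ∂(Measure.pi fun _ : Fin B => νΘ) := by
        refine lintegral_congr fun θs => ?_
        have hE := measurePreserving_piFinSuccAbove (fun _ : Fin (M + 1) => ν𝒳) 0
        set E := MeasurableEquiv.piFinSuccAbove (fun _ : Fin (M + 1) => 𝒳) 0 with hEdef
        have hG : Measurable (fun a : 𝒳 × (Fin M → 𝒳) =>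
            ((∏ b, π (θs b)) * (∏ i, gDensU νΘ π f θs ((Fin.cons a.1 a.2 : Fin (M + 1) → 𝒳) i))
              / gNorm νΘ ν𝒳 π f θs ^ M) * I (Fin.cons a.1 a.2)) :=
          hHm.comp ((measurable_const.prodMk measurable_fst).prodMk measurable_snd)
        have step := hE.lintegral_comp (f := fun a : 𝒳 × (Fin M → 𝒳) =>
            ((∏ b, π (θs b)) * (∏ i, gDensU νΘ π f θs ((Fin.cons a.1 a.2 : Fin (M + 1) → 𝒳) i))
              / gNorm νΘ ν𝒳 π f θs ^ M) * I (Fin.cons a.1 a.2)) hG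
        refine step.symm.trans (lintegral_congr fun v => ?_)
        have hEv : (Fin.cons (E v).1 (E v).2 : Fin (M + 1) → 𝒳) = v := by
          funext i
          refine Fin.cases ?_ (fun j => ?_) i <;>
            simp [hEdef, MeasurableEquiv.piFinSuccAbove, Fin.zero_succAbove, Fin.tail]
        show ((∏ b, π (θs b)) *
            (∏ i, gDensU νΘ π f θs ((Fin.cons (E v).1 (E v).2 : Fin (M + 1) → 𝒳) i))
            / gNorm νΘ ν𝒳 π f θs ^ M) * I (Fin.cons (E v).1 (E v).2) = _
        rw [hEv]
    _ = ∫⁻ q, ((∏ b, π (q.1 b)) * (∏ i, gDensU νΘ π f q.1 (q.2 i))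
            / gNorm νΘ ν𝒳 π f q.1 ^ M) * I (q.2)
        ∂((Measure.pi fun _ : Fin B => νΘ).prod
          (Measure.pi fun _ : Fin (M + 1) => ν𝒳)) :=
        (lintegral_prod _ (hDmeas.mul (hIm.comp measurable_snd)).aemeasurable).symm

end ACSSKey

/-- **Exact exchangeability in the Bayesian model.** In the Bayesian joint model `θ₀ ~ π`,
`X | θ₀ ~ f_{θ₀}`, `θ̂_1, …, θ̂_B | X` i.i.d. from the posterior `π(· | X)` (conditionally
independent of `θ₀` given `X`), and `X̃⁽¹⁾, …, X̃⁽ᴹ⁾ | (X, θ̂_{1:B})` i.i.d. from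
`g_π(· | θ̂_{1:B})` (conditionally independent of `θ₀` and `X`), the random vector
`(X, X̃⁽¹⁾, …, X̃⁽ᴹ⁾)` is exactly exchangeable. -/
theorem bayes_copies_exchangeable
    {Θ 𝒳 : Type*} [MeasurableSpace Θ] [MeasurableSpace 𝒳]
    (νΘ : Measure Θ) (ν𝒳 : Measure 𝒳) [SigmaFinite νΘ] [SigmaFinite ν𝒳]
    (f : Θ → 𝒳 → ℝ≥0∞) (hf : Measurable (Function.uncurry f))
    (hfprob : ∀ θ, IsProbabilityMeasure (ν𝒳.withDensity (f θ)))
    (π : Θ → ℝ≥0∞) (hπ : Measurable π) (hπpos : ∀ θ, 0 < π θ)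
    (hπprob : IsProbabilityMeasure (νΘ.withDensity π))
    (hsupp : ∀ θ x, f θ x ≠ 0 → marg νΘ π f x ≠ 0)
    (B M : ℕ) (hB : 1 ≤ B)
    (hnorm : ∀ θs : Fin B → Θ,
      0 < gNorm νΘ ν𝒳 π f θs ∧ gNorm νΘ ν𝒳 π f θs < ⊤) :
    Exchangeable (Measure.map
      (fun p : Θ × 𝒳 × (Fin B → Θ) × (Fin M → 𝒳) =>
        (Fin.cons p.2.1 p.2.2.2 : Fin (M + 1) → 𝒳))
      ((νΘ.prod (ν𝒳.prod ((Measure.pi fun _ : Fin B => νΘ).prod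
          (Measure.pi fun _ : Fin M => ν𝒳)))).withDensity
        fun p => π p.1 * f p.1 p.2.1
          * (∏ b, postDens νΘ π f p.2.1 (p.2.2.1 b))
          * ∏ m, gDensU νΘ π f p.2.2.1 (p.2.2.2 m) / gNorm νΘ ν𝒳 π f p.2.2.1)) := by
  intro σ
  have hσm : Measurable (fun v : Fin (M + 1) → 𝒳 => v ∘ σ) :=
    measurable_pi_iff.2 fun i => measurable_pi_apply _
  have hTm : Measurable (fun q : (Fin B → Θ) × (Fin (M + 1) → 𝒳) => (q.1, q.2 ∘ σ)) :=
    measurable_fst.prodMk (hσm.comp measurable_snd)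
  rw [ACSS.key νΘ ν𝒳 π f hπ hf hfprob hπprob hsupp hB,
    Measure.map_map hσm measurable_snd]
  have hcomp : ((fun v : Fin (M + 1) → 𝒳 => v ∘ σ) ∘
        (Prod.snd : (Fin B → Θ) × (Fin (M + 1) → 𝒳) → Fin (M + 1) → 𝒳))
      = (Prod.snd : (Fin B → Θ) × (Fin (M + 1) → 𝒳) → Fin (M + 1) → 𝒳) ∘
        (fun q : (Fin B → Θ) × (Fin (M + 1) → 𝒳) => (q.1, q.2 ∘ σ)) := rfl
  rw [hcomp, ← Measure.map_map measurable_snd hTm, ACSS.sym νΘ ν𝒳 π f hπ hf σ]
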